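/- For every A ∈ G_k and every x ∈ g_k, the conjugate A·x·A⁻¹ lies in g_k; that is, the subspace g_k of gl_k(ℂ) is invariant under the adjoint action Ad(A)(x) = A x A⁻¹ of the group G_k. -/

import Mathlib

/-- The matrix `M(a)` with `M(a)_{ij} = Σ_{s_1+⋯+s_i = j, s_l ≥ 1} a_{s_1} ⋯ a_{s_i}`. -/
noncomputable def Mmat (k : ℕ) (a : Fin k → ℂ) : Matrix (Fin k) (Fin k) ℂ :=
  fun i j =>
    ∑ s ∈ (Finset.Nat.antidiagonalTuple (i.val + 1) (j.val + 1)).filter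
        (fun s => ∀ l, 0 < s l),
      ∏ l, (if h : 1 ≤ s l ∧ s l ≤ k then a ⟨s l - 1, by omega⟩ else 0)

/-- `G_k = { M(a) : a_1 ≠ 0 }`. -/
noncomputable def Gset (k : ℕ) [NeZero k] : Set (Matrix (Fin k) (Fin k) ℂ) :=
  {A | ∃ a : Fin k → ℂ, a 0 ≠ 0 ∧ A = Mmat k a}

/-- The matrix `e_s` with `(e_s)_{i,j} = i` if `j = i + s - 1` and `0` otherwise. -/
def Emat (k s : ℕ) : Matrix (Fin k) (Fin k) ℂ :=
  fun i j => if (j : ℕ) + 1 = (i : ℕ) + s then ((i : ℕ) + 1 : ℂ) else 0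

/-- `g_k = span_ℂ{e_1, …, e_k}`. -/
noncomputable def gkAlg (k : ℕ) : Submodule ℂ (Matrix (Fin k) (Fin k) ℂ) :=
  Submodule.span ℂ (Emat k '' {s | 1 ≤ s ∧ s ≤ k})

/-! ### Auxiliary power series machinery -/

/-- The power series `f(t) = a_1 t + a_2 t² + ⋯ + a_k t^k` associated to `a`. -/
noncomputable def pf (k : ℕ) (a : Fin k → ℂ) : PowerSeries ℂ :=
  PowerSeries.mk fun n => if h : 1 ≤ n ∧ n ≤ k then a ⟨n - 1, by omega⟩ else 0

lemma coeff_pf (k : ℕ) (a : Fin k → ℂ) (n : ℕ) :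
    PowerSeries.coeff n (pf k a) =
      if h : 1 ≤ n ∧ n ≤ k then a ⟨n - 1, by omega⟩ else 0 :=
  PowerSeries.coeff_mk _ _

lemma constantCoeff_pf (k : ℕ) (a : Fin k → ℂ) :
    PowerSeries.constantCoeff (pf k a) = 0 := by
  rw [← PowerSeries.coeff_zero_eq_constantCoeff_apply, coeff_pf, dif_neg (by omega)]

lemma Mmat_apply_eq (k : ℕ) (a : Fin k → ℂ) (i j : Fin k) :
    Mmat k a i j = PowerSeries.coeff (j.val + 1) (pf k a ^ (i.val + 1)) := by
  have hjk : j.val + 1 ≤ k := j.isLt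
  rw [PowerSeries.coeff_pow, Mmat, Finset.sum_filter]
  rw [Finset.sum_congr rfl (g := fun s => ∏ l, PowerSeries.coeff (s l) (pf k a)) ?_]
  · refine (Finset.sum_nbij' (i := fun σ => fun l : Fin (i.val+1) => σ l.val)
      (j := fun τ => Finsupp.onFinset (Finset.range (i.val+1))
        (fun n => if h : n < i.val+1 then τ ⟨n, h⟩ else 0) ?_) ?_ ?_ ?_ ?_ ?_).symm
    · intro n hn
      rw [Finset.mem_range]
      by_contra hc
      exact hn (dif_neg hc)
    · intro σ hσ
      rw [Finset.mem_finsuppAntidiag] at hσ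
      rw [Finset.Nat.mem_antidiagonalTuple, Fin.sum_univ_eq_sum_range]
      exact hσ.1
    · intro τ hτ
      rw [Finset.Nat.mem_antidiagonalTuple] at hτ
      rw [Finset.mem_finsuppAntidiag]
      refine ⟨?_, Finsupp.support_onFinset_subset⟩
      rw [← Fin.sum_univ_eq_sum_range]
      simpa [Fin.is_le] using hτ
    · intro σ hσ
      rw [Finset.mem_finsuppAntidiag] at hσ
      ext n
      simp only [Finsupp.onFinset_apply]
      by_cases h : n < i.val + 1
      · rw [dif_pos h]
      · rw [dif_neg h]
        by_contra hc
        have := hσ.2 (Finsupp.mem_support_iff.mpr (fun hh => hc hh.symm))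
        rw [Finset.mem_range] at this
        omega
    · intro τ hτ
      funext l
      simp only [Finsupp.onFinset_apply, dif_pos l.isLt]
    · intro σ hσ
      exact (Fin.prod_univ_eq_prod_range (fun l => PowerSeries.coeff (σ l) (pf k a)) _).symm
  · intro s hs
    rw [Finset.Nat.mem_antidiagonalTuple] at hs
    by_cases h : ∀ l, 0 < s l
    · rw [if_pos h]
      refine Finset.prod_congr rfl fun l _ => ?_
      have h1 : s l ≤ j.val + 1 :=
        hs ▸ Finset.single_le_sum (f := s) (fun _ _ => Nat.zero_le _) (Finset.mem_univ l)
      rw [coeff_pf, dif_pos ⟨h l, le_trans h1 hjk⟩]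
    · rw [if_neg h]
      push_neg at h
      obtain ⟨l, hl⟩ := h
      refine (Finset.prod_eq_zero (Finset.mem_univ l) ?_).symm
      rw [coeff_pf, dif_neg (by omega)]

lemma coeff_pow_eq_zero' {F : PowerSeries ℂ} (hF : PowerSeries.constantCoeff F = 0)
    {m n : ℕ} (h : n < m) : PowerSeries.coeff n (F ^ m) = 0 := by
  have hd : (PowerSeries.X : PowerSeries ℂ) ^ m ∣ F ^ m :=
    pow_dvd_pow_of_dvd (PowerSeries.X_dvd_iff.mpr hF) m
  exact PowerSeries.X_pow_dvd_iff.mp hd n h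

lemma coeff_self_pow {F : PowerSeries ℂ} (hF : PowerSeries.constantCoeff F = 0) (m : ℕ) :
    PowerSeries.coeff m (F ^ m) = (PowerSeries.coeff 1 F) ^ m := by
  set G : PowerSeries ℂ := PowerSeries.mk fun n => PowerSeries.coeff (n + 1) F with hG
  have hFG : F = PowerSeries.X * G := by
    ext n
    cases n with
    | zero => simpa using hF
    | succ n => rw [PowerSeries.coeff_succ_X_mul]; simp [hG]
  have hcG : PowerSeries.constantCoeff G = PowerSeries.coeff 1 F := by
    rw [← PowerSeries.coeff_zero_eq_constantCoeff_apply]; simp [hG]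
  have key : PowerSeries.coeff m ((PowerSeries.X * G) ^ m) =
      (PowerSeries.constantCoeff G) ^ m := by
    rw [mul_pow, PowerSeries.coeff_X_pow_mul', if_pos le_rfl, Nat.sub_self,
      PowerSeries.coeff_zero_eq_constantCoeff_apply, map_pow]
  rw [← hcG]
  conv_lhs => rw [hFG]
  exact key

/-! ### Triangularity and invertibility of `Mmat` -/

lemma Mmat_triangular (k : ℕ) (a : Fin k → ℂ) :
    (Mmat k a).BlockTriangular id := by
  intro i j hij
  rw [Mmat_apply_eq]
  exact coeff_pow_eq_zero' (constantCoeff_pf k a) (Nat.succ_lt_succ hij)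

lemma Mmat_diag (k : ℕ) [NeZero k] (a : Fin k → ℂ) (i : Fin k) :
    Mmat k a i i = (a 0) ^ (i.val + 1) := by
  rw [Mmat_apply_eq, coeff_self_pow (constantCoeff_pf k a)]
  congr 1
  rw [coeff_pf, dif_pos ⟨le_rfl, by have := i.isLt; omega⟩]
  have h0 : ∀ h : 1 - 1 < k, a ⟨1 - 1, h⟩ = a 0 := fun h => congrArg a (Fin.ext (by simp))
  rw [h0]

lemma Mmat_det_isUnit (k : ℕ) [NeZero k] (a : Fin k → ℂ) (ha : a 0 ≠ 0) :
    IsUnit (Mmat k a).det := by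
  rw [Matrix.det_of_upperTriangular (Mmat_triangular k a)]
  rw [isUnit_iff_ne_zero]
  rw [Finset.prod_ne_zero_iff]
  intro i _
  rw [Mmat_diag]
  exact pow_ne_zero _ ha

/-! ### The series `g = f^s / f'` and the matrix `y` -/

lemma constantCoeff_dpf (k : ℕ) [NeZero k] (a : Fin k → ℂ) :
    PowerSeries.constantCoeff (PowerSeries.derivative ℂ (pf k a)) = a 0 := by
  rw [← PowerSeries.coeff_zero_eq_constantCoeff_apply, PowerSeries.coeff_derivative, coeff_pf,
    dif_pos ⟨le_rfl, Nat.one_le_iff_ne_zero.mpr (NeZero.ne k)⟩]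
  have h0 : ∀ h : 1 - 1 < k, a ⟨1 - 1, h⟩ = a 0 := fun h => congrArg a (Fin.ext (by simp))
  rw [h0]
  simp

noncomputable def gser (k : ℕ) (a : Fin k → ℂ) (s : ℕ) : PowerSeries ℂ :=
  pf k a ^ s * (PowerSeries.derivative ℂ (pf k a))⁻¹

lemma gser_mul_dpf (k : ℕ) [NeZero k] (a : Fin k → ℂ) (ha : a 0 ≠ 0) (s : ℕ) :
    gser k a s * PowerSeries.derivative ℂ (pf k a) = pf k a ^ s := by
  rw [gser, mul_assoc,
    PowerSeries.inv_mul_cancel _ (by rw [constantCoeff_dpf]; exact ha), mul_one]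

lemma constantCoeff_gser (k : ℕ) (a : Fin k → ℂ) (s : ℕ) (hs : 1 ≤ s) :
    PowerSeries.constantCoeff (gser k a s) = 0 := by
  rw [gser, map_mul, map_pow, constantCoeff_pf, zero_pow (by omega), zero_mul]

lemma series_key (k : ℕ) [NeZero k] (a : Fin k → ℂ) (ha : a 0 ≠ 0) (s i : ℕ) :
    gser k a s * PowerSeries.derivative ℂ (pf k a ^ (i + 1))
      = (i + 1) • pf k a ^ (i + s) := by
  rw [Derivation.leibniz_pow]
  simp only [Nat.add_sub_cancel, smul_eq_mul]
  rw [mul_smul_comm]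
  congr 1
  calc gser k a s * (pf k a ^ i * PowerSeries.derivative ℂ (pf k a))
      = pf k a ^ i * (gser k a s * PowerSeries.derivative ℂ (pf k a)) := by ring
    _ = pf k a ^ i * pf k a ^ s := by rw [gser_mul_dpf k a ha]
    _ = pf k a ^ (i + s) := by rw [← pow_add]

noncomputable def yMat (k : ℕ) (a : Fin k → ℂ) (s : ℕ) : Matrix (Fin k) (Fin k) ℂ :=
  ∑ r : Fin k, (PowerSeries.coeff (r.val + 1) (gser k a s)) • Emat k (r.val + 1)

lemma yMat_mem (k : ℕ) (a : Fin k → ℂ) (s : ℕ) : yMat k a s ∈ gkAlg k := by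
  refine Submodule.sum_mem _ fun r _ => Submodule.smul_mem _ _ (Submodule.subset_span ?_)
  exact ⟨r.val + 1, ⟨by omega, by have := r.isLt; omega⟩, rfl⟩

lemma yMat_apply (k : ℕ) (a : Fin k → ℂ) (s : ℕ) (m j : Fin k) :
    yMat k a s m j = if m.val ≤ j.val
      then ((m.val : ℂ) + 1) * PowerSeries.coeff (j.val - m.val + 1) (gser k a s)
      else 0 := by
  rw [yMat, Matrix.sum_apply]
  simp only [Matrix.smul_apply, Emat, smul_eq_mul]
  by_cases hmj : m.val ≤ j.val
  · rw [if_pos hmj]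
    have hjm : j.val - m.val < k := by have := j.isLt; omega
    rw [Finset.sum_eq_single (⟨j.val - m.val, hjm⟩ : Fin k)]
    · rw [if_pos (by simp; omega)]
      simp only [Fin.val_mk]
      ring
    · intro r _ hr
      rw [if_neg, mul_zero]
      intro hc
      exact hr (Fin.ext (by simp; omega))
    · exact fun h => absurd (Finset.mem_univ _) h
  · rw [if_neg hmj]
    refine Finset.sum_eq_zero fun r _ => ?_
    rw [if_neg (by omega), mul_zero]

lemma EM_apply (k : ℕ) (a : Fin k → ℂ) (s : ℕ) (hs1 : 1 ≤ s) (i j : Fin k) :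
    (Emat k s * Mmat k a) i j
      = ((i.val : ℂ) + 1) * PowerSeries.coeff (j.val + 1) (pf k a ^ (i.val + s)) := by
  have hik := i.isLt
  have hjk := j.isLt
  rw [Matrix.mul_apply]
  simp only [Emat]
  by_cases his : i.val + s ≤ k
  · rw [Finset.sum_eq_single (⟨i.val + s - 1, by omega⟩ : Fin k)]
    · rw [if_pos (by simp; omega), Mmat_apply_eq]
      simp only [Fin.val_mk]
      rw [show i.val + s - 1 + 1 = i.val + s by omega]
    · intro r _ hr
      rw [if_neg, zero_mul]
      intro hc
      exact hr (Fin.ext (by simp; omega))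
    · exact fun h => absurd (Finset.mem_univ _) h
  · rw [Finset.sum_eq_zero, eq_comm,
      coeff_pow_eq_zero' (constantCoeff_pf k a) (by omega : j.val + 1 < i.val + s), mul_zero]
    intro m _
    rw [if_neg (by have := m.isLt; omega), zero_mul]

lemma MY_apply (k : ℕ) (a : Fin k → ℂ) (s : ℕ) (i j : Fin k) :
    (Mmat k a * yMat k a s) i j
      = ∑ q ∈ Finset.range (j.val + 1),
          PowerSeries.coeff (q + 1) (pf k a ^ (i.val + 1)) *
            (((q : ℂ) + 1) * PowerSeries.coeff (j.val - q + 1) (gser k a s)) := by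
  have hjk := j.isLt
  set f : ℕ → ℂ := fun q => PowerSeries.coeff (q + 1) (pf k a ^ (i.val + 1)) *
      (if q ≤ j.val then ((q : ℂ) + 1) * PowerSeries.coeff (j.val - q + 1) (gser k a s)
       else 0) with hf
  calc (Mmat k a * yMat k a s) i j = ∑ m : Fin k, f m.val := by
        rw [Matrix.mul_apply]
        exact Finset.sum_congr rfl fun m _ => by rw [Mmat_apply_eq, yMat_apply]
    _ = ∑ q ∈ Finset.range k, f q := Fin.sum_univ_eq_sum_range f k
    _ = ∑ q ∈ Finset.range (j.val + 1), f q := by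
        refine (Finset.sum_subset (by intro q hq; rw [Finset.mem_range] at *; omega) ?_).symm
        intro q hq hnq
        rw [Finset.mem_range] at hq hnq
        rw [hf]
        simp only []
        rw [if_neg (by omega), mul_zero]
    _ = _ := by
        refine Finset.sum_congr rfl fun q hq => ?_
        rw [Finset.mem_range] at hq
        rw [hf]
        simp only []
        rw [if_pos (by omega)]

lemma key_identity (k : ℕ) [NeZero k] (a : Fin k → ℂ) (ha : a 0 ≠ 0)
    (s : ℕ) (hs1 : 1 ≤ s) :
    Emat k s * Mmat k a = Mmat k a * yMat k a s := by
  ext i j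
  rw [EM_apply k a s hs1 i j, MY_apply k a s i j]
  have h1 : ((i.val : ℂ) + 1) * PowerSeries.coeff (j.val + 1) (pf k a ^ (i.val + s))
      = PowerSeries.coeff (j.val + 1) ((i.val + 1) • pf k a ^ (i.val + s)) := by
    rw [map_nsmul, nsmul_eq_mul]
    push_cast
    ring
  rw [h1, ← series_key k a ha s i.val, PowerSeries.coeff_mul,
    Finset.Nat.sum_antidiagonal_eq_sum_range_succ
      (fun p q => PowerSeries.coeff p (gser k a s) *
        PowerSeries.coeff q (PowerSeries.derivative ℂ (pf k a ^ (i.val + 1)))) (j.val + 1),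
    Finset.sum_range_succ',
    PowerSeries.coeff_zero_eq_constantCoeff_apply, constantCoeff_gser k a s hs1, zero_mul,
    add_zero]
  conv_lhs => rw [← Finset.sum_range_reflect]
  refine Finset.sum_congr rfl fun p hp => ?_
  rw [Finset.mem_range] at hp
  rw [show j.val + 1 - 1 - p + 1 = j.val - p + 1 by omega,
    show j.val + 1 - (j.val - p + 1) = p by omega,
    PowerSeries.coeff_derivative]
  ring

/-- For every `A ∈ G_k` and `x ∈ g_k`, the conjugate `A·x·A⁻¹` lies in `g_k`:
`g_k` is invariant under the adjoint action of `G_k`. -/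
theorem gkAlg_adjoint_invariant (k : ℕ) [NeZero k]
    (A : Matrix (Fin k) (Fin k) ℂ) (hA : A ∈ Gset k)
    (x : Matrix (Fin k) (Fin k) ℂ) (hx : x ∈ gkAlg k) :
    A * x * A⁻¹ ∈ gkAlg k := by
  obtain ⟨a, ha, rfl⟩ := hA
  have hdet : IsUnit (Mmat k a).det := Mmat_det_isUnit k a ha
  have h1 : (Mmat k a)⁻¹ * Mmat k a = 1 := Matrix.nonsing_inv_mul _ hdet
  have h2 : Mmat k a * (Mmat k a)⁻¹ = 1 := Matrix.mul_nonsing_inv _ hdet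
  have conj1 : ∀ z : Matrix (Fin k) (Fin k) ℂ,
      Mmat k a * ((Mmat k a)⁻¹ * z * Mmat k a) * (Mmat k a)⁻¹ = z := by
    intro z
    calc Mmat k a * ((Mmat k a)⁻¹ * z * Mmat k a) * (Mmat k a)⁻¹
        = (Mmat k a * (Mmat k a)⁻¹) * z * (Mmat k a * (Mmat k a)⁻¹) := by
          simp only [Matrix.mul_assoc]
      _ = z := by rw [h2, Matrix.one_mul, Matrix.mul_one]
  have conj2 : ∀ z : Matrix (Fin k) (Fin k) ℂ,
      (Mmat k a)⁻¹ * (Mmat k a * z * (Mmat k a)⁻¹) * Mmat k a = z := by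
    intro z
    calc (Mmat k a)⁻¹ * (Mmat k a * z * (Mmat k a)⁻¹) * Mmat k a
        = ((Mmat k a)⁻¹ * Mmat k a) * z * ((Mmat k a)⁻¹ * Mmat k a) := by
          simp only [Matrix.mul_assoc]
      _ = z := by rw [h1, Matrix.one_mul, Matrix.mul_one]
  let e : Matrix (Fin k) (Fin k) ℂ ≃ₗ[ℂ] Matrix (Fin k) (Fin k) ℂ :=
    { toFun := fun z => (Mmat k a)⁻¹ * z * Mmat k a
      map_add' := fun z w => by rw [Matrix.mul_add, Matrix.add_mul]
      map_smul' := fun c z => by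
        simp [Matrix.mul_smul, Matrix.smul_mul]
      invFun := fun z => Mmat k a * z * (Mmat k a)⁻¹
      left_inv := fun z => conj1 z
      right_inv := fun z => conj2 z }
  have hmaple : Submodule.map (e : Matrix (Fin k) (Fin k) ℂ →ₗ[ℂ] Matrix (Fin k) (Fin k) ℂ)
      (gkAlg k) ≤ gkAlg k := by
    rw [gkAlg, Submodule.map_span, Submodule.span_le]
    rintro _ ⟨_, ⟨s, hs, rfl⟩, rfl⟩
    show (Mmat k a)⁻¹ * Emat k s * Mmat k a ∈ gkAlg k
    have hy : (Mmat k a)⁻¹ * Emat k s * Mmat k a = yMat k a s := by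
      rw [Matrix.mul_assoc, key_identity k a ha s hs.1, ← Matrix.mul_assoc, h1, Matrix.one_mul]
    rw [hy]
    exact yMat_mem k a s
  have hmap : Submodule.map (e : Matrix (Fin k) (Fin k) ℂ →ₗ[ℂ] Matrix (Fin k) (Fin k) ℂ)
      (gkAlg k) = gkAlg k :=
    Submodule.eq_of_le_of_finrank_le hmaple
      (le_of_eq (LinearEquiv.finrank_map_eq e (gkAlg k)).symm)
  rw [← hmap] at hx
  obtain ⟨z, hz, hzx⟩ := hx
  have hxz : Mmat k a * x * (Mmat k a)⁻¹ = z := by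
    rw [← hzx]
    exact conj1 z
  rw [hxz]
  exact hz
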